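/- arXiv:1306.3797 — 4 statements merged into one kernel-verified Lean document; each statement's English description precedes it below -/
import Mathlib

section
/- Let (P, \mathcal{I}) be a po-independence system that is not a poset matroid. Then there exists an order-preserving weight function w : P → ℝ≥0 and sets A, B ∈ \mathcal{I} such that: w(b) = 1 for b ∈ B \ A, w(a) = α for a ∈ A with 1 < α < 1 + 1/(|A| - |A ∩ B|), w(x) = 0 otherwise, and for this w the set B has strictly greater total weight than any set in \mathcal{I} that is contained in A ∪ (P \ (A ∪ B)). -/
open Finset

def IsUpset {P : Type*} [PartialOrder P] (S : Finset P) : Prop :=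
  ∀ ⦃x⦄, x ∈ S → ∀ ⦃y⦄, x ≤ y → y ∈ S

def MaxIn {P : Type*} [PartialOrder P] (T : Finset P) (y : P) : Prop :=
  y ∈ T ∧ ∀ z ∈ T, y ≤ z → z = y

def PosetMatroid {P : Type*} [PartialOrder P] [DecidableEq P]
    (I : Set (Finset P)) : Prop :=
  I.Nonempty ∧ (∀ S ∈ I, IsUpset S) ∧
  (∀ X Y : Finset P, Y ∈ I → IsUpset X → X ⊆ Y → X ∈ I) ∧
  (∀ X ∈ I, ∀ Y ∈ I, X.card < Y.card →
      ∃ y, MaxIn (Y \ X) y ∧ insert y X ∈ I)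

/-- if a po-independence system fails the exchange axiom, there
is an order-preserving weight function (α on A, 1 on B \ A, 0 elsewhere, with
1 < α < 1 + 1/(|A| - |A ∩ B|)) for which B outweighs every independent set
contained in A ∪ (P \ (A ∪ B)). -/
theorem stmt2 {P : Type*} [Fintype P] [PartialOrder P] [DecidableEq P]
    (I : Set (Finset P)) (hne : I.Nonempty)
    (hup : ∀ S ∈ I, IsUpset S)
    (hdc : ∀ X Y : Finset P, Y ∈ I → IsUpset X → X ⊆ Y → X ∈ I)
    (hfail : ∃ A ∈ I, ∃ B ∈ I, B.card = A.card + 1 ∧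
        ∀ b, MaxIn (B \ A) b → IsUpset (insert b A) → insert b A ∉ I) :
    ∃ (w : P → ℝ) (α : ℝ) (A B : Finset P), A ∈ I ∧ B ∈ I ∧
      (∀ x y : P, x ≤ y → w x ≤ w y) ∧
      (∀ b ∈ B \ A, w b = 1) ∧
      (∀ a ∈ A, w a = α) ∧
      1 < α ∧ α < 1 + 1 / ((A.card : ℝ) - ((A ∩ B).card : ℝ)) ∧
      (∀ x, x ∉ A ∪ B → w x = 0) ∧
      (∀ S ∈ I, S ⊆ A ∪ (Finset.univ \ (A ∪ B)) →
        ∑ x ∈ S, w x < ∑ x ∈ B, w x) := by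
  obtain ⟨A, hA, B, hB, hcard, hfail⟩ := hfail
  have hBup := hup B hB
  -- A is not a subset of B
  have hnsub : ¬ A ⊆ B := by
    intro hsub
    have hBA : (B \ A).Nonempty := by
      rw [Finset.sdiff_nonempty]
      intro h
      have := Finset.card_le_card h
      omega
    obtain ⟨m, hm, hmax⟩ : ∃ m ∈ B \ A, ∀ x ∈ B \ A, ¬ m < x := by
      obtain ⟨m, hm⟩ := Finset.exists_maximal hBA
      exact ⟨m, hm.1, fun x hx hlt => lt_irrefl _ (lt_of_lt_of_le hlt (hm.2 hx hlt.le))⟩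
    have hmB : m ∈ B := (Finset.mem_sdiff.mp hm).1
    have hmA : m ∉ A := (Finset.mem_sdiff.mp hm).2
    have hins : insert m A = B := by
      apply Finset.eq_of_subset_of_card_le
      · intro x hx
        rcases Finset.mem_insert.mp hx with h | h
        · exact h ▸ hmB
        · exact hsub h
      · rw [Finset.card_insert_of_notMem hmA]; omega
    exact hfail m ⟨hm, fun z hz hle => by
        by_contra hne'
        exact hmax z hz (lt_of_le_of_ne hle (Ne.symm hne'))⟩
      (hins ▸ hBup) (hins ▸ hB)
  have hnne : (A \ B).Nonempty := by rwa [Finset.sdiff_nonempty]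
  set n : ℕ := (A \ B).card with hn
  have hn1 : 1 ≤ n := Finset.card_pos.mpr hnne
  have hnR : (1 : ℝ) ≤ (n : ℝ) := by exact_mod_cast hn1
  have hn0 : (0 : ℝ) < (n : ℝ) := by linarith
  set α : ℝ := 1 + 1 / (2 * n) with hα
  have hcardn : n + (A ∩ B).card = A.card := Finset.card_sdiff_add_card_inter A B
  clear_value n α
  have hα1 : 1 < α := by
    have : 0 < 1 / (2 * (n : ℝ)) := by positivity
    linarith [this]
  refine ⟨fun x => if x ∈ A then α else if x ∈ B then 1 else 0, α, A, B, hA, hB,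
    ?_, ?_, ?_, hα1, ?_, ?_, ?_⟩
  · -- order preserving
    intro x y hxy
    by_cases hyA : y ∈ A
    · simp only [hyA, if_pos]
      by_cases hxA : x ∈ A
      · simp [hxA]
      · simp only [hxA, if_neg, if_false]
        by_cases hxB : x ∈ B <;> simp [hxB] <;> linarith
    · have hxA : x ∉ A := fun h => hyA (hup A hA h hxy)
      simp only [hxA, hyA, if_neg, if_false]
      by_cases hyB : y ∈ B
      · simp only [hyB, if_pos]
        by_cases hxB : x ∈ B <;> simp [hxB]
      · have hxB : x ∉ B := fun h => hyB (hBup h hxy)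
        simp [hxB, hyB]
  · intro b hb
    rw [Finset.mem_sdiff] at hb
    simp [hb.1, hb.2]
  · intro a ha; simp [ha]
  · -- α < 1 + 1/(|A| - |A∩B|)
    have heq : (A.card : ℝ) - ((A ∩ B).card : ℝ) = (n : ℝ) := by
      have : (n : ℝ) + ((A ∩ B).card : ℝ) = (A.card : ℝ) := by exact_mod_cast hcardn
      linarith
    rw [heq, hα]
    have : 1 / (2 * (n : ℝ)) < 1 / (n : ℝ) := by
      apply div_lt_div_of_pos_left one_pos hn0
      linarith
    linarith
  · intro x hx
    rw [Finset.mem_union] at hx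
    push_neg at hx
    simp [hx.1, hx.2]
  · intro S hS hsub
    have hSB : ∀ x ∈ S, x ∉ A → x ∉ B := by
      intro x hx hxA hxB
      rcases Finset.mem_union.mp (hsub hx) with h | h
      · exact hxA h
      · exact (Finset.mem_sdiff.mp h).2 (Finset.mem_union_right _ hxB)
    -- compute sums
    have hsumS : ∑ x ∈ S, (if x ∈ A then α else if x ∈ B then 1 else 0) =
        α * ((S ∩ A).card : ℝ) := by
      rw [← Finset.sum_inter_add_sum_sdiff S A]
      have h1 : ∑ x ∈ S ∩ A, (if x ∈ A then α else if x ∈ B then (1:ℝ) else 0) =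
          α * ((S ∩ A).card : ℝ) := by
        rw [Finset.sum_congr rfl (fun x hx => if_pos (Finset.mem_inter.mp hx).2)]
        simp [mul_comm]
      have h2 : ∑ x ∈ S \ A, (if x ∈ A then α else if x ∈ B then (1:ℝ) else 0) = 0 := by
        apply Finset.sum_eq_zero
        intro x hx
        rw [Finset.mem_sdiff] at hx
        simp [hx.2, hSB x hx.1 hx.2]
      rw [h1, h2, add_zero]
    have hsumB : ∑ x ∈ B, (if x ∈ A then α else if x ∈ B then 1 else 0) =
        α * ((A ∩ B).card : ℝ) + ((B \ A).card : ℝ) := by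
      rw [← Finset.sum_inter_add_sum_sdiff B A]
      have h1 : ∑ x ∈ B ∩ A, (if x ∈ A then α else if x ∈ B then (1:ℝ) else 0) =
          α * ((A ∩ B).card : ℝ) := by
        rw [Finset.sum_congr rfl (fun x hx => if_pos (Finset.mem_inter.mp hx).2)]
        rw [Finset.inter_comm]
        simp [mul_comm]
      have h2 : ∑ x ∈ B \ A, (if x ∈ A then α else if x ∈ B then (1:ℝ) else 0) =
          ((B \ A).card : ℝ) := by
        have he : ∀ x ∈ B \ A, (if x ∈ A then α else if x ∈ B then (1:ℝ) else 0) = 1 := by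
          intro x hx
          rw [Finset.mem_sdiff] at hx
          simp [hx.1, hx.2]
        rw [Finset.sum_congr rfl he, Finset.sum_const, nsmul_eq_mul, mul_one]
      rw [h1, h2]
    rw [hsumS, hsumB]
    have hBA : ((B \ A).card : ℝ) = (n : ℝ) + 1 := by
      have h1 : (B \ A).card + (A ∩ B).card = B.card := by
        rw [Finset.inter_comm]
        exact Finset.card_sdiff_add_card_inter B A
      have : (B \ A).card = n + 1 := by omega
      exact_mod_cast this
    rw [hBA]
    have hc : ((S ∩ A).card : ℝ) ≤ ((A ∩ B).card : ℝ) + (n : ℝ) := by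
      have h1 : (S ∩ A).card ≤ A.card := Finset.card_le_card Finset.inter_subset_right
      have : (S ∩ A).card ≤ (A ∩ B).card + n := by omega
      exact_mod_cast this
    have hαn : α * (n : ℝ) = (n : ℝ) + 1 / 2 := by
      rw [hα]; field_simp
    have hαpos : (0:ℝ) < α := by linarith
    have h1 : α * ((S ∩ A).card : ℝ) ≤ α * (((A ∩ B).card : ℝ) + (n : ℝ)) :=
      mul_le_mul_of_nonneg_left hc hαpos.le
    have h2 : α * (((A ∩ B).card : ℝ) + (n : ℝ)) =
        α * ((A ∩ B).card : ℝ) + α * (n : ℝ) := mul_add _ _ _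
    linarith [hαn]
end

section
/- Let (P, \mathcal{I}) be a poset matroid, and let S = {b_1, …, b_n} ∈ \mathcal{I} and A = {a_1, …, a_m} ∈ \mathcal{I} with w order-preserving, w(b_1) ≥ … ≥ w(b_n), w(a_1) ≥ … ≥ w(a_m). Suppose S is the output of the greedy algorithm PGREEDY (so in particular S cannot be extended: for every up-set X with S ⊊ X, X ∉ \mathcal{I}, and at each step S chooses a maximal element of maximum weight among those extending the current set to an independent up-set). Then m ≤ n and w(a_i) ≤ w(b_i) for all i = 1, …, m; consequently w(A) ≤ w(S). -/
open Finset

lemma fin_card_filter_lt {n : ℕ} (j : Fin n) :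
    ((univ : Finset (Fin n)).filter (· < j)).card = j.val := by
  simp [Finset.filter_gt_eq_Iio]

lemma fin_card_filter_le {n : ℕ} (j : Fin n) :
    ((univ : Finset (Fin n)).filter (· ≤ j)).card = j.val + 1 := by
  simp [Finset.filter_ge_eq_Iic]

/-- if S = {b 0, …, b (n-1)} is a greedy output (it cannot be
extended to a larger independent up-set, and each b k has maximum weight
among the maximal elements extending the current prefix to an independent
set) and A = {a 0, …, a (m-1)} is any independent set, both listed in
weight-decreasing order, then m ≤ n, w(a i) ≤ w(b i) for each i, and
w(A) ≤ w(S). -/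
theorem stmt4 {P : Type*} [Fintype P] [PartialOrder P] [DecidableEq P]
    (I : Set (Finset P)) (hI : PosetMatroid I)
    (w : P → ℝ) (hw0 : ∀ x, 0 ≤ w x) (hw : ∀ x y : P, x ≤ y → w x ≤ w y)
    (n m : ℕ) (b : Fin n → P) (a : Fin m → P)
    (hbinj : Function.Injective b) (hainj : Function.Injective a)
    (hS : Finset.image b Finset.univ ∈ I) (hA : Finset.image a Finset.univ ∈ I)
    (hbdec : ∀ i j : Fin n, i ≤ j → w (b j) ≤ w (b i))
    (hadec : ∀ i j : Fin m, i ≤ j → w (a j) ≤ w (a i))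
    (hSmax : ∀ X : Finset P, IsUpset X → Finset.image b Finset.univ ⊂ X →
        X ∉ I)
    (hgreedy : ∀ k : Fin n, ∀ y : P,
        MaxIn (Finset.univ \ Finset.image b ((Finset.univ : Finset (Fin n)).filter (· < k))) y →
        insert y (Finset.image b ((Finset.univ : Finset (Fin n)).filter (· < k))) ∈ I →
        w y ≤ w (b k)) :
    (∃ hmn : m ≤ n, ∀ i : Fin m, w (a i) ≤ w (b (Fin.castLE hmn i))) ∧
      ∑ x ∈ Finset.image a Finset.univ, w x ≤
        ∑ x ∈ Finset.image b Finset.univ, w x := by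
  obtain ⟨-, hup, hdown, hexch⟩ := hI
  have hcardS : (Finset.image b Finset.univ).card = n := by
    rw [Finset.card_image_of_injective _ hbinj, Finset.card_univ, Fintype.card_fin]
  have hcardA : (Finset.image a Finset.univ).card = m := by
    rw [Finset.card_image_of_injective _ hainj, Finset.card_univ, Fintype.card_fin]
  -- m ≤ n
  have hmn : m ≤ n := by
    by_contra hlt
    push_neg at hlt
    obtain ⟨y, hymax, hyI⟩ := hexch _ hS _ hA (by rw [hcardS, hcardA]; exact hlt)
    have hynS : y ∉ Finset.image b Finset.univ := (Finset.mem_sdiff.1 hymax.1).2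
    exact hSmax _ (hup _ hyI) (Finset.ssubset_insert hynS) hyI
  -- pointwise bound
  have key : ∀ i : Fin m, w (a i) ≤ w (b (Fin.castLE hmn i)) := by
    intro i
    by_contra hci
    push_neg at hci
    set i' : Fin n := Fin.castLE hmn i with hi'
    set c : ℝ := w (b i') with hc
    -- threshold sets
    set Bc : Finset P := (Finset.image b Finset.univ).filter (fun x => c < w x) with hBc
    set Ac : Finset P := (Finset.image a Finset.univ).filter (fun x => c < w x) with hAc
    have hBcup : IsUpset Bc := by
      intro x hx y hxy
      rw [hBc, Finset.mem_filter] at hx ⊢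
      exact ⟨hup _ hS hx.1 hxy, lt_of_lt_of_le hx.2 (hw _ _ hxy)⟩
    have hAcup : IsUpset Ac := by
      intro x hx y hxy
      rw [hAc, Finset.mem_filter] at hx ⊢
      exact ⟨hup _ hA hx.1 hxy, lt_of_lt_of_le hx.2 (hw _ _ hxy)⟩
    have hBcI : Bc ∈ I := hdown _ _ hS hBcup (Finset.filter_subset _ _)
    have hAcI : Ac ∈ I := hdown _ _ hA hAcup (Finset.filter_subset _ _)
    -- index set of b-elements above threshold
    set J : Finset (Fin n) := (univ : Finset (Fin n)).filter (fun j => c < w (b j)) with hJ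
    have hJdc : ∀ j ∈ J, ∀ j' : Fin n, j' ≤ j → j' ∈ J := by
      intro j hj j' hle
      rw [hJ, Finset.mem_filter] at hj ⊢
      exact ⟨Finset.mem_univ _, lt_of_lt_of_le hj.2 (hbdec j' j hle)⟩
    have hi'notJ : i' ∉ J := by
      rw [hJ, Finset.mem_filter]
      simp [hc]
    -- J is an initial segment
    have hJchar : ∀ j : Fin n, j ∈ J ↔ j.val < J.card := by
      intro j
      constructor
      · intro hj
        have hsub : (univ : Finset (Fin n)).filter (· ≤ j) ⊆ J := by
          intro j' hj'
          rw [Finset.mem_filter] at hj'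
          exact hJdc j hj j' hj'.2
        have := Finset.card_le_card hsub
        rw [fin_card_filter_le] at this
        omega
      · intro hj
        by_contra hnj
        have hsub : J ⊆ (univ : Finset (Fin n)).filter (· < j) := by
          intro j' hj'
          rw [Finset.mem_filter]
          refine ⟨Finset.mem_univ _, ?_⟩
          by_contra hge
          push_neg at hge
          exact hnj (hJdc j' hj' j hge)
        have := Finset.card_le_card hsub
        rw [fin_card_filter_lt] at this
        omega
    have hJi' : ∀ j ∈ J, j < i' := by
      intro j hj
      by_contra hge
      push_neg at hge
      exact hi'notJ (hJdc j hj i' hge)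
    have hJcard_le : J.card ≤ i'.val := by
      by_contra hgt
      push_neg at hgt
      have : i' ∈ J := (hJchar i').2 hgt
      exact hi'notJ this
    have hKlt : J.card < n := lt_of_le_of_lt hJcard_le i'.isLt
    set K : Fin n := ⟨J.card, hKlt⟩ with hK
    -- Bc is exactly the image of the greedy prefix of length J.card
    have hJK : J = (univ : Finset (Fin n)).filter (· < K) := by
      ext j
      rw [hJchar j]
      simp [Fin.lt_def, hK]
    have hBcJ : Bc = Finset.image b ((univ : Finset (Fin n)).filter (· < K)) := by
      rw [← hJK]
      ext x
      simp only [hBc, hJ, Finset.mem_filter, Finset.mem_image, Finset.mem_univ, true_and]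
      constructor
      · rintro ⟨⟨j, rfl⟩, hcx⟩; exact ⟨j, hcx, rfl⟩
      · rintro ⟨j, hcx, rfl⟩; exact ⟨⟨j, rfl⟩, hcx⟩
    have hcardBc : Bc.card = J.card := by
      rw [hBcJ, ← hJK, Finset.card_image_of_injective _ hbinj]
    -- Ac has at least i+1 elements
    have hcardAc : i.val + 1 ≤ Ac.card := by
      have hsub : Finset.image a ((univ : Finset (Fin m)).filter (· ≤ i)) ⊆ Ac := by
        intro x hx
        rw [Finset.mem_image] at hx
        obtain ⟨j, hj, rfl⟩ := hx
        rw [Finset.mem_filter] at hj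
        rw [hAc, Finset.mem_filter]
        refine ⟨Finset.mem_image_of_mem _ (Finset.mem_univ _), lt_of_lt_of_le hci (hadec j i hj.2)⟩
      have := Finset.card_le_card hsub
      rwa [Finset.card_image_of_injective _ hainj, fin_card_filter_le] at this
    -- exchange
    obtain ⟨y, hymax, hyI⟩ := hexch _ hBcI _ hAcI (by
      rw [hcardBc]
      have : i'.val = i.val := rfl
      omega)
    obtain ⟨hyAc, hynBc⟩ := Finset.mem_sdiff.1 hymax.1
    have hycw : c < w y := (Finset.mem_filter.1 hyAc).2
    -- y is maximal in the complement of the prefix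
    have hyins : insert y Bc ∈ I := hyI
    have hyinsup : IsUpset (insert y Bc) := hup _ hyins
    have hymax' : MaxIn ((Finset.univ : Finset P) \
        Finset.image b ((univ : Finset (Fin n)).filter (· < K))) y := by
      rw [← hBcJ]
      constructor
      · exact Finset.mem_sdiff.2 ⟨Finset.mem_univ _, hynBc⟩
      · intro z hz hyz
        rw [Finset.mem_sdiff] at hz
        have : z ∈ insert y Bc := hyinsup (Finset.mem_insert_self y Bc) hyz
        rcases Finset.mem_insert.1 this with h | h
        · exact h
        · exact absurd h hz.2
    have := hgreedy K y hymax' (by rwa [← hBcJ])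
    -- but w (b K) ≤ c since K ∉ J
    have hKnotJ : K ∉ J := by
      rw [hJchar]
      simp [hK]
    have hwbK : w (b K) ≤ c := by
      rw [hJ, Finset.mem_filter] at hKnotJ
      push_neg at hKnotJ
      exact hKnotJ (Finset.mem_univ _)
    linarith
  refine ⟨⟨hmn, key⟩, ?_⟩
  have h1 : ∑ x ∈ Finset.image a Finset.univ, w x = ∑ i : Fin m, w (a i) :=
    Finset.sum_image (fun x _ y _ h => hainj h)
  have h2 : ∑ x ∈ Finset.image b Finset.univ, w x = ∑ i : Fin n, w (b i) :=
    Finset.sum_image (fun x _ y _ h => hbinj h)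
  rw [h1, h2]
  calc ∑ i : Fin m, w (a i) ≤ ∑ i : Fin m, w (b (Fin.castLE hmn i)) :=
        Finset.sum_le_sum (fun i _ => key i)
    _ = ∑ j ∈ Finset.image (Fin.castLE hmn) Finset.univ, w (b j) :=
        (Finset.sum_image (f := fun j => w (b j))
          (fun x _ y _ h => Fin.castLE_injective hmn h)).symm
    _ ≤ ∑ j : Fin n, w (b j) :=
        Finset.sum_le_sum_of_subset_of_nonneg (Finset.subset_univ _) (fun j _ _ => hw0 _)
end

section
/- Let (P, \mathcal{I}) be a po-independence system. Suppose that for every order-preserving weight function w : P → ℝ≥0 and every maximal-by-inclusion greedy output S (a set built by iterating over P, at each step removing a maximal element of maximum weight among remaining elements and adding it to S whenever the result is in \mathcal{I}), the set S achieves the maximum of w over \mathcal{I}. Then (P, \mathcal{I}) satisfies the poset-matroid exchange axiom: for every X, Y ∈ \mathcal{I} with |X| < |Y|, there exists y maximal in Y \ X such that X ∪ {y} ∈ \mathcal{I}. -/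
open Finset

open Classical in
/-- One step of PGREEDY: add `m` to the current set `S` if the result is
independent, otherwise discard `m`. -/
noncomputable def pgreedyStep {P : Type*} [DecidableEq P]
    (I : Set (Finset P)) (S : Finset P) (m : P) : Finset P :=
  if insert m S ∈ I then insert m S else S

/-- The output of PGREEDY when the elements of `P` are examined in the order
given by the list `l`. -/
noncomputable def pgreedy {P : Type*} [DecidableEq P]
    (I : Set (Finset P)) (l : List P) : Finset P :=
  l.foldl (pgreedyStep I) ∅

/-- `l` is an admissible examination order for PGREEDY: it enumerates `P`
without repetition and, at each step, the examined element is a maximal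
element of maximum weight among the remaining ones. -/
def IsGreedyOrder {P : Type*} [Fintype P] [PartialOrder P] [DecidableEq P]
    (w : P → ℝ) (l : List P) : Prop :=
  l.Nodup ∧ (∀ x : P, x ∈ l) ∧
  ∀ i : ℕ, ∀ hi : i < l.length,
    MaxIn (l.drop i).toFinset (l.get ⟨i, hi⟩) ∧
    ∀ z, MaxIn (l.drop i).toFinset z → w z ≤ w (l.get ⟨i, hi⟩)

/-- if, for every order-preserving nonnegative weight function,
every output of PGREEDY achieves the maximum weight over the independent
sets, then the po-independence system satisfies the poset-matroid exchange
axiom. -/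
theorem stmt18 {P : Type*} [Fintype P] [PartialOrder P] [DecidableEq P]
    (I : Set (Finset P)) (hne : I.Nonempty)
    (hup : ∀ S ∈ I, IsUpset S)
    (hdc : ∀ X Y : Finset P, Y ∈ I → IsUpset X → X ⊆ Y → X ∈ I)
    (hgreedy : ∀ w : P → ℝ, (∀ x, 0 ≤ w x) → (∀ x y : P, x ≤ y → w x ≤ w y) →
        ∀ l : List P, IsGreedyOrder w l →
          ∀ A ∈ I, ∑ x ∈ A, w x ≤ ∑ x ∈ pgreedy I l, w x) :
    ∀ X ∈ I, ∀ Y ∈ I, X.card < Y.card →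
      ∃ y, MaxIn (Y \ X) y ∧ insert y X ∈ I := by
  classical
  intro X hX Y hY hcard
  by_contra hgoal
  push_neg at hgoal
  have hXup : IsUpset X := hup X hX
  have hYup : IsUpset Y := hup Y hY
  set n := Fintype.card P with hn
  set r : P → ℕ := fun a => (Finset.univ.filter (fun b => a ≤ b)).card with hrdef
  set f : P → ℕ := fun a => if a ∈ X then 0 else if a ∈ Y then 1 else 2 with hfdef
  set key : P → ℕ := fun a => f a * (n + 1) + r a with hkeydef
  set w : P → ℝ := fun a => if a ∈ X ∪ Y then 1 else 0 with hwdef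
  -- basic facts about r, f, key
  have hr_le : ∀ a, r a ≤ n := fun a => by
    rw [hrdef]
    exact (Finset.card_filter_le _ _).trans (le_of_eq Finset.card_univ)
  have hr_anti : ∀ a b : P, a < b → r b < r a := by
    intro a b hab
    rw [hrdef]
    apply Finset.card_lt_card
    rw [Finset.ssubset_iff_of_subset]
    · refine ⟨a, by simp, ?_⟩
      simp only [Finset.mem_filter, Finset.mem_univ, true_and]
      exact hab.not_ge
    · intro c hc
      simp only [Finset.mem_filter, Finset.mem_univ, true_and] at hc ⊢
      exact le_trans hab.le hc
  have hf2 : ∀ c, f c ≤ 2 := by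
    intro c; rw [hfdef]; dsimp only; split_ifs <;> omega
  have hfX : ∀ a, f a = 0 ↔ a ∈ X := by
    intro a; rw [hfdef]; dsimp only; split_ifs <;> simp [*]
  have hfXY : ∀ a, f a ≤ 1 ↔ a ∈ X ∪ Y := by
    intro a; rw [hfdef]; dsimp only
    split_ifs <;> simp [*]
  have hf_anti : ∀ a b : P, a ≤ b → f b ≤ f a := by
    intro a b hab
    by_cases haX : a ∈ X
    · have hbX : b ∈ X := hXup haX hab
      have h1 : f b = 0 := (hfX b).mpr hbX
      omega
    · by_cases haY : a ∈ Y
      · have hbY : b ∈ Y := hYup haY hab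
        have h1 : f a = 1 := by rw [hfdef]; simp [haX, haY]
        have h2 : f b ≤ 1 := (hfXY b).mpr (Finset.mem_union_right _ hbY)
        omega
      · have h1 : f a = 2 := by rw [hfdef]; simp [haX, haY]
        have := hf2 b
        omega
  have hkey_anti : ∀ a b : P, a < b → key b < key a := by
    intro a b hab
    have h1 : f b ≤ f a := hf_anti a b hab.le
    have h2 : r b < r a := hr_anti a b hab
    have h3 : f b * (n + 1) ≤ f a * (n + 1) := Nat.mul_le_mul_right _ h1
    rw [hkeydef]; dsimp only; omega
  have hkeydiv : ∀ a, key a / (n + 1) = f a := by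
    intro a
    rw [hkeydef]; dsimp only
    rw [Nat.mul_comm, Nat.mul_add_div (Nat.succ_pos n),
      Nat.div_eq_of_lt (Nat.lt_succ_of_le (hr_le a)), Nat.add_zero]
  have hkey_f : ∀ a b : P, key a ≤ key b → f a ≤ f b := fun a b h => by
    rw [← hkeydiv a, ← hkeydiv b]; exact Nat.div_le_div_right h
  -- upset of X ∪ Y and weight facts
  have hXYup : ∀ ⦃a b : P⦄, a ≤ b → a ∈ X ∪ Y → b ∈ X ∪ Y := by
    intro a b hab ha
    rcases Finset.mem_union.mp ha with h | h
    · exact Finset.mem_union_left _ (hXup h hab)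
    · exact Finset.mem_union_right _ (hYup h hab)
  have hw0 : ∀ x, (0:ℝ) ≤ w x := by
    intro x; rw [hwdef]; dsimp only; split_ifs <;> norm_num
  have hwmono : ∀ a b : P, a ≤ b → w a ≤ w b := by
    intro a b hab
    rw [hwdef]; dsimp only
    split_ifs with h1 h2
    · exact le_rfl
    · exact absurd (hXYup hab h1) h2
    · norm_num
    · exact le_rfl
  -- the sorted list
  set l : List P := (Finset.univ.toList (α := P)).mergeSort
      (fun a b => decide (key a ≤ key b)) with hldef
  have hperm : l.Perm Finset.univ.toList := by
    rw [hldef]; exact List.mergeSort_perm _ _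
  have hnodup : l.Nodup := hperm.nodup_iff.mpr (Finset.nodup_toList _)
  have hmeml : ∀ x : P, x ∈ l := fun x =>
    hperm.mem_iff.mpr (Finset.mem_toList.mpr (Finset.mem_univ x))
  have hsorted : ∀ (i j : ℕ) (hi : i < l.length) (hj : j < l.length),
      i ≤ j → key l[i] ≤ key l[j] := by
    have hp : List.Pairwise (fun a b : P => key a ≤ key b) l := by
      have h := List.pairwise_mergeSort
        (le := fun a b : P => decide (key a ≤ key b))
        (by intro a b c h1 h2; simp only [decide_eq_true_eq] at *; omega)
        (by intro a b; simp only [Bool.or_eq_true, decide_eq_true_eq]; omega)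
        (Finset.univ.toList (α := P))
      rw [hldef]
      exact h.imp (by intro a b hab; simpa using hab)
    rw [List.pairwise_iff_getElem] at hp
    intro i j hi hj hij
    rcases Nat.lt_or_ge i j with h | h
    · exact hp i j hi hj h
    · have : i = j := le_antisymm hij h
      subst this; exact le_rfl
  have hmem_take : ∀ (j : ℕ) (b : P),
      b ∈ l.take j ↔ ∃ (q : ℕ) (_ : q < l.length), q < j ∧ l[q] = b := by
    intro j b
    constructor
    · intro hb
      rw [List.mem_iff_getElem] at hb
      obtain ⟨q, hq, hqe⟩ := hb
      rw [List.length_take] at hq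
      refine ⟨q, by omega, by omega, ?_⟩
      rw [← hqe]
      exact (List.getElem_take).symm
    · rintro ⟨q, hql, hqj, rfl⟩
      rw [List.mem_iff_getElem]
      refine ⟨q, by rw [List.length_take]; omega, ?_⟩
      exact List.getElem_take
  have htake_lt : ∀ (j : ℕ) (a b : P), a ∈ l.take j → key b < key a → b ∈ l.take j := by
    intro j a b ha hk
    rw [hmem_take] at ha ⊢
    obtain ⟨p, hpl, hpj, rfl⟩ := ha
    obtain ⟨q, hql, rfl⟩ : ∃ (q : ℕ) (_ : q < l.length), l[q] = b :=
      List.mem_iff_getElem.mp (hmeml b)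
    refine ⟨q, hql, ?_, rfl⟩
    by_contra hq
    have := hsorted p q hpl hql (by omega)
    omega
  have hf_take : ∀ (i : ℕ) (hi : i < l.length) (a : P), a ∈ l.take i → f a ≤ f l[i] := by
    intro i hi a ha
    rw [hmem_take] at ha
    obtain ⟨p, hpl, hpi, rfl⟩ := ha
    exact hkey_f _ _ (hsorted p i hpl hi (by omega))
  have hf_notake : ∀ (i : ℕ) (hi : i < l.length) (a : P), a ∉ l.take i → f l[i] ≤ f a := by
    intro i hi a ha
    obtain ⟨q, hql, rfl⟩ : ∃ (q : ℕ) (_ : q < l.length), l[q] = a :=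
      List.mem_iff_getElem.mp (hmeml a)
    have hq : ¬ q < i := fun h => ha ((hmem_take i _).mpr ⟨q, hql, h, rfl⟩)
    exact hkey_f _ _ (hsorted i q hi hql (by omega))
  have hdropmem : ∀ (i : ℕ) (z : P),
      z ∈ (l.drop i).toFinset ↔ ∃ (q : ℕ) (_ : q < l.length), i ≤ q ∧ l[q] = z := by
    intro i z
    rw [List.mem_toFinset, List.mem_iff_getElem]
    constructor
    · rintro ⟨j, hj, hje⟩
      rw [List.length_drop] at hj
      refine ⟨i + j, by omega, by omega, ?_⟩
      rw [← hje]
      exact (List.getElem_drop).symm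
    · rintro ⟨q, hql, hiq, rfl⟩
      refine ⟨q - i, by rw [List.length_drop]; omega, ?_⟩
      rw [List.getElem_drop]
      congr 1
      omega
  have hgo : IsGreedyOrder w l := by
    refine ⟨hnodup, hmeml, ?_⟩
    intro i hi
    simp only [List.get_eq_getElem]
    constructor
    · constructor
      · rw [List.mem_toFinset, List.drop_eq_getElem_cons hi]
        exact List.mem_cons_self
      · intro z hz hle
        rw [hdropmem] at hz
        obtain ⟨q, hql, hiq, rfl⟩ := hz
        by_contra hne
        have hlt : l[i] < l[q] := lt_of_le_of_ne hle (fun h => hne h.symm)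
        have h1 := hkey_anti _ _ hlt
        have h2 := hsorted i q hi hql hiq
        omega
    · intro z hz
      have hz' := hz.1
      rw [hdropmem] at hz'
      obtain ⟨q, hql, hiq, hqe⟩ := hz'
      rw [hwdef]; dsimp only
      split_ifs with h1 h2
      · exact le_rfl
      · exfalso
        have h3 : f z ≤ 1 := (hfXY z).mpr h1
        have h4 : key l[i] ≤ key l[q] := hsorted i q hi hql hiq
        have h5 : f l[i] ≤ f z := hqe ▸ hkey_f _ _ h4
        exact h2 ((hfXY _).mp (le_trans h5 h3))
      · norm_num
      · exact le_rfl
  -- the greedy run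
  set S : ℕ → Finset P := fun i => (l.take i).foldl (pgreedyStep I) ∅ with hSdef
  set T : ℕ → Finset P := fun i => (l.take i).toFinset with hTdef
  have hstep : ∀ (i : ℕ) (hi : i < l.length), S (i+1) = pgreedyStep I (S i) l[i] := by
    intro i hi
    rw [hSdef]; dsimp only
    rw [← List.take_concat_get hi, List.concat_eq_append, List.foldl_append]
    rfl
  have hTsucc : ∀ (i : ℕ) (hi : i < l.length), T (i+1) = insert l[i] (T i) := by
    intro i hi
    rw [hTdef]; dsimp only
    ext x
    rw [Finset.mem_insert]
    simp only [List.mem_toFinset, ← List.take_concat_get hi, List.concat_eq_append,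
      List.mem_append, List.mem_singleton]
    tauto
  have hinv : ∀ i, i ≤ l.length →
      S i ⊆ T i ∧ (X ∩ T i ⊆ S i) ∧ (S i ∩ (X ∪ Y) ⊆ X) := by
    intro i
    induction i with
    | zero =>
      intro _
      rw [hSdef, hTdef]
      simp
    | succ i ih =>
      intro hi1
      have hi : i < l.length := by omega
      obtain ⟨h1, h2, h3⟩ := ih (by omega)
      have hTmem : ∀ a : P, a ∈ T i ↔ a ∈ l.take i := by
        intro a; rw [hTdef]; simp [List.mem_toFinset]
      rcases Nat.lt_or_ge (f l[i]) 1 with hfm | hfm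
      · -- phase 1 : l[i] ∈ X
        have hmX : l[i] ∈ X := (hfX _).mp (by omega)
        have hTX : T i ⊆ X := by
          intro a ha
          have := hf_take i hi a ((hTmem a).mp ha)
          exact (hfX a).mp (by omega)
        have hSeq : S i = T i := by
          refine Finset.Subset.antisymm h1 ?_
          intro a ha
          exact h2 (Finset.mem_inter.mpr ⟨hTX ha, ha⟩)
        have hupS : IsUpset (insert l[i] (T i)) := by
          intro a ha b hab
          rcases Finset.mem_insert.mp ha with rfl | haT
          · rcases eq_or_lt_of_le hab with rfl | hlt
            · exact Finset.mem_insert_self _ _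
            · apply Finset.mem_insert_of_mem
              rw [hTmem]
              obtain ⟨q, hql, rfl⟩ : ∃ (q : ℕ) (_ : q < l.length), l[q] = b :=
                List.mem_iff_getElem.mp (hmeml b)
              have hk := hkey_anti _ _ hlt
              have hqi : q < i := by
                by_contra hq
                have := hsorted i q hi hql (by omega)
                omega
              exact (hmem_take i _).mpr ⟨q, hql, hqi, rfl⟩
          · rcases eq_or_lt_of_le hab with rfl | hlt
            · exact Finset.mem_insert_of_mem haT
            · exact Finset.mem_insert_of_mem ((hTmem b).mpr
                (htake_lt i a b ((hTmem a).mp haT) (hkey_anti a b hlt)))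
        have hsubX : insert l[i] (T i) ⊆ X := Finset.insert_subset hmX hTX
        have hins : insert l[i] (S i) ∈ I := by
          rw [hSeq]
          exact hdc _ X hX hupS hsubX
        have hS1 : S (i+1) = insert l[i] (S i) := by
          rw [hstep i hi, pgreedyStep, if_pos hins]
        refine ⟨?_, ?_, ?_⟩
        · rw [hS1, hSeq, hTsucc i hi]
        · rw [hS1, hSeq, hTsucc i hi]
          exact Finset.inter_subset_right
        · intro a ha
          have := (Finset.mem_inter.mp ha).1
          rw [hS1, hSeq] at this
          exact hsubX this
      · -- phases 2 and 3 : X is fully processed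
        have hXT : X ⊆ T i := by
          intro a haX
          by_contra hnot
          have hfa : f a = 0 := (hfX a).mpr haX
          have := hf_notake i hi a (fun h => hnot ((hTmem a).mpr h))
          omega
        have hXS : X ⊆ S i := fun a ha => h2 (Finset.mem_inter.mpr ⟨ha, hXT ha⟩)
        have hTT : T i ⊆ T (i+1) := by
          rw [hTsucc i hi]; exact Finset.subset_insert _ _
        rcases Nat.lt_or_ge (f l[i]) 2 with hfm2 | hfm2
        · -- phase 2 : l[i] ∈ Y \ X
          have hmXY : l[i] ∈ X ∪ Y := (hfXY _).mp (by omega)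
          have hmX : l[i] ∉ X := fun h => by
            have := (hfX _).mpr h; omega
          have hmY : l[i] ∈ Y := by
            rcases Finset.mem_union.mp hmXY with h | h
            · exact absurd h hmX
            · exact h
          have hTXY : T i ⊆ X ∪ Y := by
            intro a ha
            have := hf_take i hi a ((hTmem a).mp ha)
            exact (hfXY a).mp (by omega)
          have hSX : S i = X := by
            refine Finset.Subset.antisymm ?_ hXS
            intro a ha
            exact h3 (Finset.mem_inter.mpr ⟨ha, hTXY (h1 ha)⟩)
          have hno : insert l[i] (S i) ∉ I := by
            rw [hSX]
            intro hmem
            refine hgoal l[i] ⟨Finset.mem_sdiff.mpr ⟨hmY, hmX⟩, ?_⟩ hmem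
            intro u hu hmu
            have huX := Finset.mem_sdiff.mp hu
            have : u ∈ insert l[i] X :=
              hup _ hmem (Finset.mem_insert_self _ _) hmu
            rcases Finset.mem_insert.mp this with h | h
            · exact h
            · exact absurd h huX.2
          have hS1 : S (i+1) = S i := by
            rw [hstep i hi, pgreedyStep, if_neg hno]
          refine ⟨?_, ?_, ?_⟩
          · rw [hS1]; exact h1.trans hTT
          · intro a ha
            rw [hS1, hSX]
            exact (Finset.mem_inter.mp ha).1
          · intro a ha
            rw [hS1, hSX] at ha
            exact (Finset.mem_inter.mp ha).1
        · -- phase 3 : l[i] ∉ X ∪ Y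
          have hmXY : l[i] ∉ X ∪ Y := fun h => by
            have := (hfXY _).mpr h; omega
          have hsub : S (i+1) ⊆ insert l[i] (S i) ∧ S i ⊆ S (i+1) := by
            rw [hstep i hi, pgreedyStep]
            split_ifs
            · exact ⟨Finset.Subset.refl _, Finset.subset_insert _ _⟩
            · exact ⟨Finset.subset_insert _ _, Finset.Subset.refl _⟩
          refine ⟨?_, ?_, ?_⟩
          · intro a ha
            rcases Finset.mem_insert.mp (hsub.1 ha) with rfl | h
            · rw [hTsucc i hi]; exact Finset.mem_insert_self _ _
            · exact hTT (h1 h)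
          · intro a ha
            exact hsub.2 (hXS (Finset.mem_inter.mp ha).1)
          · intro a ha
            obtain ⟨haS, haXY⟩ := Finset.mem_inter.mp ha
            rcases Finset.mem_insert.mp (hsub.1 haS) with rfl | h
            · exact absurd haXY hmXY
            · exact h3 (Finset.mem_inter.mpr ⟨h, haXY⟩)
  -- conclusion
  obtain ⟨h1, h2, h3⟩ := hinv l.length le_rfl
  have hTfull : T l.length = Finset.univ := by
    rw [hTdef]; dsimp only
    rw [List.take_length]
    ext x
    simp [hmeml x]
  have hpg : pgreedy I l = S l.length := by
    rw [hSdef]; dsimp only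
    rw [List.take_length]
    rfl
  have hXG : X ⊆ S l.length := by
    intro a ha
    exact h2 (Finset.mem_inter.mpr ⟨ha, by rw [hTfull]; exact Finset.mem_univ a⟩)
  have hGXY : S l.length ∩ (X ∪ Y) = X :=
    Finset.Subset.antisymm h3
      (fun a ha => Finset.mem_inter.mpr ⟨hXG ha, Finset.mem_union_left _ ha⟩)
  have hsumY : ∑ x ∈ Y, w x = (Y.card : ℝ) := by
    rw [hwdef]; dsimp only
    rw [Finset.sum_ite_mem, Finset.inter_eq_left.mpr Finset.subset_union_right,
      Finset.sum_const, nsmul_eq_mul, mul_one]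
  have hsumG : ∑ x ∈ S l.length, w x = (X.card : ℝ) := by
    rw [hwdef]; dsimp only
    rw [Finset.sum_ite_mem, hGXY, Finset.sum_const, nsmul_eq_mul, mul_one]
  have hfin := hgreedy w hw0 hwmono l hgo Y hY
  rw [hpg, hsumY, hsumG] at hfin
  exact absurd (Nat.cast_le.mp hfin) (not_le.mpr hcard)
end

section
/- Let (P, \mathcal{I}) be a poset matroid and w : P → ℝ≥0 an order-preserving weight function. Then every output S of the greedy algorithm PGREEDY satisfies w(S) = max{ w(A) : A ∈ \mathcal{I} }. -/
open Finset

section Aux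
variable {P : Type*} [Fintype P] [PartialOrder P] [DecidableEq P]

lemma aux_empty_mem {I : Set (Finset P)} (hI : PosetMatroid I) : (∅ : Finset P) ∈ I := by
  obtain ⟨⟨Y, hY⟩, _, hdc, _⟩ := hI
  exact hdc ∅ Y hY (fun x hx => by simp at hx) (empty_subset _)

/-- the set of not-yet-examined elements is a down-set -/
lemma aux_downset {w : P → ℝ} {l : List P} (hl : IsGreedyOrder w l) (i : ℕ) :
    ∀ x ∈ (l.drop i).toFinset, ∀ y, y ≤ x → y ∈ (l.drop i).toFinset := by
  induction i with
  | zero => intro x _ y _; simp [hl.2.1 y]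
  | succ i ih =>
    by_cases hi : i < l.length
    · have hdrop : l.drop i = l[i] :: l.drop (i+1) := List.drop_eq_getElem_cons hi
      have hmax := (hl.2.2 i hi).1
      simp only [List.get_eq_getElem] at hmax
      have hnd : (l.drop i).Nodup := hl.1.drop
      rw [hdrop] at hnd
      have hnd' := List.nodup_cons.1 hnd
      intro x hx y hyx
      have hxi : x ∈ (l.drop i).toFinset := by
        rw [hdrop]; simp only [List.toFinset_cons, mem_insert]
        exact Or.inr hx
      have hy := ih x hxi y hyx
      rw [hdrop] at hy
      simp only [List.toFinset_cons, mem_insert] at hy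
      rcases hy with h | h
      · exfalso
        have hxeq : x = l[i] := hmax.2 x hxi (by rw [← h]; exact hyx)
        exact hnd'.1 (by rw [← hxeq]; exact List.mem_toFinset.1 hx)
      · exact h
    · intro x hx
      rw [List.drop_eq_nil_of_le (by omega)] at hx
      simp at hx

/-- prefix/suffix complementarity -/
lemma aux_mem_take_iff {l : List P} (hnd : l.Nodup) (hall : ∀ x : P, x ∈ l) (i : ℕ) (x : P) :
    x ∈ (l.take i).toFinset ↔ x ∉ (l.drop i).toFinset := by
  have hdisj : (l.take i).Disjoint (l.drop i) := by
    have := hnd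
    rw [← List.take_append_drop i l, List.nodup_append] at this
    exact fun a ha hb => this.2.2 a ha a hb rfl
  have hx : x ∈ l.take i ∨ x ∈ l.drop i := by
    have := hall x
    rw [← List.take_append_drop i l, List.mem_append] at this
    exact this
  simp only [List.mem_toFinset]
  constructor
  · intro h h'; exact hdisj h h'
  · intro h; rcases hx with h' | h'
    · exact h'
    · exact absurd h' h

/-- the examined prefix is an up-set -/
lemma aux_take_upset {w : P → ℝ} {l : List P} (hl : IsGreedyOrder w l) (i : ℕ) :
    IsUpset ((l.take i).toFinset) := by
  intro x hx y hxy
  rw [aux_mem_take_iff hl.1 hl.2.1] at hx ⊢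
  intro hy
  exact hx (aux_downset hl i y hy x hxy)

/-- weights are non-increasing along a greedy order -/
lemma aux_w_anti {w : P → ℝ} {l : List P} (hl : IsGreedyOrder w l)
    (hw : ∀ x y : P, x ≤ y → w x ≤ w y) (i : ℕ) (hi : i + 1 < l.length) :
    w (l[i+1]) ≤ w (l[i]) := by
  have hi' : i < l.length := by omega
  have hmax1 := (hl.2.2 (i+1) hi).1
  simp only [List.get_eq_getElem] at hmax1
  have hmem : l[i+1] ∈ (l.drop i).toFinset := by
    have : l[i+1] ∈ l.drop (i+1) := List.mem_toFinset.1 hmax1.1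
    exact List.mem_toFinset.2 (by
      rw [List.drop_eq_getElem_cons hi']; exact List.mem_cons_of_mem _ this)
  have hmaxw := (hl.2.2 i hi').2
  simp only [List.get_eq_getElem] at hmaxw
  by_cases hcase : MaxIn (l.drop i).toFinset (l[i+1])
  · exact hmaxw _ hcase
  · have : ∃ z ∈ (l.drop i).toFinset, l[i+1] ≤ z ∧ z ≠ l[i+1] := by
      by_contra hcon
      push_neg at hcon
      exact hcase ⟨hmem, fun z hz hle => hcon z hz hle⟩
    obtain ⟨z, hz, hle, hne⟩ := this
    have hznot : z ∉ (l.drop (i+1)).toFinset := fun h => hne (hmax1.2 z h hle)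
    have hzeq : z = l[i] := by
      rw [List.drop_eq_getElem_cons hi'] at hz
      simp only [List.toFinset_cons, mem_insert] at hz
      rcases hz with h | h
      · exact h
      · exact absurd h hznot
    exact le_trans (hw _ _ (hzeq ▸ hle)) (le_refl _)

end Aux

section Aux2
set_option linter.unusedSectionVars false
variable {P : Type*} [Fintype P] [PartialOrder P] [DecidableEq P]

lemma aux_take_succ (I : Set (Finset P)) (l : List P) (i : ℕ) (hi : i < l.length) :
    pgreedy I (l.take (i+1)) = pgreedyStep I (pgreedy I (l.take i)) l[i] := by
  unfold pgreedy
  rw [List.take_succ, List.getElem?_eq_getElem hi]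
  simp only [Option.toList_some, List.foldl_append, List.foldl_cons, List.foldl_nil]

lemma aux_take_stall (I : Set (Finset P)) (l : List P) (i : ℕ) (hi : l.length ≤ i) :
    pgreedy I (l.take (i+1)) = pgreedy I (l.take i) := by
  rw [List.take_of_length_le hi, List.take_of_length_le (by omega)]

lemma aux_step_cases (I : Set (Finset P)) (S : Finset P) (m : P) :
    pgreedyStep I S m = insert m S ∧ insert m S ∈ I ∨ pgreedyStep I S m = S ∧ insert m S ∉ I := by
  unfold pgreedyStep
  by_cases h : insert m S ∈ I
  · left; simp [h]
  · right; simp [h]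

lemma aux_S_mem {I : Set (Finset P)} (hI : PosetMatroid I) (l : List P) (i : ℕ) :
    pgreedy I (l.take i) ∈ I ∧ pgreedy I (l.take i) ⊆ (l.take i).toFinset := by
  induction i with
  | zero => simpa [pgreedy] using aux_empty_mem hI
  | succ i ih =>
    by_cases hi : i < l.length
    · have hstep := aux_take_succ I l i hi
      have htake : l.take (i+1) = l.take i ++ [l[i]] := by
        rw [List.take_succ, List.getElem?_eq_getElem hi]; rfl
      have hsub2 : (l.take i).toFinset ⊆ (l.take (i+1)).toFinset := by
        intro x hx
        rw [htake]
        simp only [List.toFinset_append, Finset.mem_union]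
        exact Or.inl hx
      have hmem : l[i] ∈ (l.take (i+1)).toFinset :=
        List.mem_toFinset.2 (by rw [htake]; exact List.mem_append.2 (Or.inr (List.mem_singleton.2 rfl)))
      rcases aux_step_cases I (pgreedy I (l.take i)) l[i] with ⟨heq, hin⟩ | ⟨heq, _⟩
      · rw [hstep, heq]
        exact ⟨hin, insert_subset hmem (fun x hx => hsub2 (ih.2 hx))⟩
      · rw [hstep, heq]
        exact ⟨ih.1, fun x hx => hsub2 (ih.2 hx)⟩
    · have h1 : l.take (i+1) = l.take i := by
        rw [List.take_of_length_le (by omega), List.take_of_length_le (by omega)]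
      rw [h1]; exact ih

lemma aux_S_mono (I : Set (Finset P)) (l : List P) {j i : ℕ} (h : j ≤ i) :
    pgreedy I (l.take j) ⊆ pgreedy I (l.take i) := by
  induction i with
  | zero => have : j = 0 := by omega
            subst this; exact subset_rfl
  | succ i ih =>
    rcases Nat.lt_or_ge j (i+1) with h' | h'
    · have hji : j ≤ i := by omega
      refine (ih hji).trans ?_
      by_cases hi : i < l.length
      · rw [aux_take_succ I l i hi]
        rcases aux_step_cases I (pgreedy I (l.take i)) l[i] with ⟨heq, _⟩ | ⟨heq, _⟩
        · rw [heq]; exact subset_insert _ _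
        · rw [heq]
      · rw [aux_take_stall I l i (by omega)]
    · have : j = i + 1 := by omega
      subst this; exact subset_rfl

lemma aux_S_inter {I : Set (Finset P)} (hI : PosetMatroid I) {w : P → ℝ} {l : List P}
    (hl : IsGreedyOrder w l) {j i : ℕ} (h : j ≤ i) :
    ∀ x ∈ pgreedy I (l.take i), x ∈ (l.take j).toFinset → x ∈ pgreedy I (l.take j) := by
  induction i with
  | zero => have : j = 0 := by omega
            subst this; exact fun x hx _ => hx
  | succ i ih =>
    rcases Nat.lt_or_ge i j with h' | h'
    · have : j = i + 1 := by omega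
      subst this; exact fun x hx _ => hx
    · intro x hx hxj
      by_cases hi : i < l.length
      · rw [aux_take_succ I l i hi] at hx
        rcases aux_step_cases I (pgreedy I (l.take i)) l[i] with ⟨heq, _⟩ | ⟨heq, _⟩
        · rw [heq] at hx
          rcases Finset.mem_insert.1 hx with hxeq | hx'
          · exfalso
            have hdropj : x ∈ (l.drop j).toFinset := by
              have h1 : x ∈ l.drop i := by
                rw [hxeq, List.drop_eq_getElem_cons hi]; exact List.mem_cons_self
              have h2 : l.drop i = List.drop (i - j) (l.drop j) := by
                rw [List.drop_drop]; congr 1; omega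
              rw [h2] at h1
              exact List.mem_toFinset.2 (List.drop_subset _ _ h1)
            exact (aux_mem_take_iff hl.1 hl.2.1 j x).1 hxj hdropj
          · exact ih h' x hx' hxj
        · rw [heq] at hx
          exact ih h' x hx hxj
      · rw [aux_take_stall I l i (by omega)] at hx
        exact ih h' x hx hxj

end Aux2

section Aux3
set_option linter.unusedSectionVars false
variable {P : Type*} [Fintype P] [PartialOrder P] [DecidableEq P]

lemma aux_count {I : Set (Finset P)} (hI : PosetMatroid I) {w : P → ℝ} {l : List P}
    (hl : IsGreedyOrder w l) (i : ℕ) {A : Finset P} (hA : A ∈ I) :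
    (A ∩ (l.take i).toFinset).card ≤ (pgreedy I (l.take i)).card := by
  by_contra hcon
  push_neg at hcon
  have hS := aux_S_mem hI l i
  have hB : A ∩ (l.take i).toFinset ∈ I := by
    refine hI.2.2.1 _ A hA ?_ (inter_subset_left)
    intro x hx z hxz
    rcases mem_inter.1 hx with ⟨hxA, hxT⟩
    exact mem_inter.2 ⟨hI.2.1 A hA hxA hxz, aux_take_upset hl i hxT hxz⟩
  obtain ⟨y, hyMax, hyIns⟩ := hI.2.2.2 _ hS.1 _ hB hcon
  have hy := hyMax.1
  rw [mem_sdiff] at hy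
  obtain ⟨hyB, hyS⟩ := hy
  have hyT : y ∈ (l.take i).toFinset := (mem_inter.1 hyB).2
  obtain ⟨⟨j, hj⟩, hget⟩ := List.mem_iff_get.1 (List.mem_toFinset.1 hyT)
  have hji : j < i := by
    have := hj; simp only [List.length_take] at this; omega
  have hjlen : j < l.length := by
    have := hj; simp only [List.length_take] at this; omega
  have hyeq : y = l[j] := by
    rw [← hget, List.get_eq_getElem]
    exact List.getElem_take
  have hmaxj := (hl.2.2 j hjlen).1
  simp only [List.get_eq_getElem] at hmaxj
  have hSj := aux_S_mem hI l j
  have hup : IsUpset (insert y (pgreedy I (l.take j))) := by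
    intro x hx z hxz
    rcases mem_insert.1 hx with hxy | hxS
    · by_cases hzy : z = y
      · rw [hzy]; exact mem_insert_self _ _
      · have hzS : z ∈ pgreedy I (l.take i) := by
          have hz1 : z ∈ insert y (pgreedy I (l.take i)) :=
            hI.2.1 _ hyIns (mem_insert_self y _) (by rw [← hxy]; exact hxz)
          rcases mem_insert.1 hz1 with h | h
          · exact absurd h hzy
          · exact h
        have hzT : z ∈ (l.take j).toFinset := by
          rw [aux_mem_take_iff hl.1 hl.2.1]
          intro hzD
          exact hzy ((hmaxj.2 z hzD (by rw [← hyeq, ← hxy]; exact hxz)).trans hyeq.symm)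
        exact mem_insert.2 (Or.inr (aux_S_inter hI hl (le_of_lt hji) z hzS hzT))
    · exact mem_insert.2 (Or.inr (hI.2.1 _ hSj.1 hxS hxz))
  have hmemI : insert y (pgreedy I (l.take j)) ∈ I :=
    hI.2.2.1 _ _ hyIns hup (insert_subset_insert y (aux_S_mono I l (le_of_lt hji)))
  have hy1 : y ∈ pgreedy I (l.take (j+1)) := by
    rw [aux_take_succ I l j hjlen]
    rcases aux_step_cases I (pgreedy I (l.take j)) l[j] with ⟨heq, _⟩ | ⟨heq, hnin⟩
    · rw [heq, ← hyeq]; exact mem_insert_self _ _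
    · exact absurd (by rw [← hyeq]; exact hmemI) hnin
  exact hyS (aux_S_mono I l (by omega : j + 1 ≤ i) hy1)

end Aux3

noncomputable def auxV {P : Type*} (w : P → ℝ) (l : List P) (i : ℕ) : ℝ :=
  if h : i < l.length then w (l[i]) else 0

section Aux4
set_option linter.unusedSectionVars false
variable {P : Type*} [Fintype P] [PartialOrder P] [DecidableEq P]

lemma aux_main {I : Set (Finset P)} (hI : PosetMatroid I) {w : P → ℝ}
    (hw0 : ∀ x, 0 ≤ w x) (hw : ∀ x y : P, x ≤ y → w x ≤ w y) {l : List P}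
    (hl : IsGreedyOrder w l) {A : Finset P} (hA : A ∈ I) (i : ℕ) :
    ∑ x ∈ A ∩ (l.take i).toFinset, w x +
      auxV w l i * (((pgreedy I (l.take i)).card : ℝ) - ((A ∩ (l.take i).toFinset).card : ℝ)) ≤
      ∑ x ∈ pgreedy I (l.take i), w x := by
  induction i with
  | zero => simp [pgreedy]
  | succ i ih =>
    by_cases hi : i < l.length
    · have hstep := aux_take_succ I l i hi
      have htake : l.take (i+1) = l.take i ++ [l[i]] := by
        rw [List.take_succ, List.getElem?_eq_getElem hi]; rfl
      have hTsucc : (l.take (i+1)).toFinset = insert l[i] (l.take i).toFinset := by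
        rw [htake, List.toFinset_append]
        ext x
        simp only [mem_union, List.toFinset_cons, List.toFinset_nil, insert_empty_eq,
          mem_insert, mem_singleton]
        tauto
      have hmD : l[i] ∈ (l.drop i).toFinset :=
        List.mem_toFinset.2 (by rw [List.drop_eq_getElem_cons hi]; exact List.mem_cons_self)
      have hmT : l[i] ∉ (l.take i).toFinset :=
        fun h => (aux_mem_take_iff hl.1 hl.2.1 i l[i]).1 h hmD
      have hmS : l[i] ∉ pgreedy I (l.take i) := fun h => hmT ((aux_S_mem hI l i).2 h)
      have hmB : l[i] ∉ A ∩ (l.take i).toFinset := fun h => hmT (mem_inter.1 h).2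
      have hVi : auxV w l i = w l[i] := dif_pos hi
      have hVle : auxV w l (i+1) ≤ w l[i] := by
        unfold auxV
        by_cases h : i + 1 < l.length
        · rw [dif_pos h]; exact aux_w_anti hl hw i h
        · rw [dif_neg h]; exact hw0 _
      have hV0 : 0 ≤ auxV w l (i+1) := by
        unfold auxV
        by_cases h : i + 1 < l.length
        · rw [dif_pos h]; exact hw0 _
        · rw [dif_neg h]
      have hcard' := aux_count hI hl (i+1) hA
      have hcR : ((A ∩ (l.take (i+1)).toFinset).card : ℝ) ≤
          ((pgreedy I (l.take (i+1))).card : ℝ) := by exact_mod_cast hcard'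
      rw [hVi] at ih
      by_cases hmA : l[i] ∈ A
      · have hAsucc : A ∩ (l.take (i+1)).toFinset = insert l[i] (A ∩ (l.take i).toFinset) := by
          rw [hTsucc]; ext x
          simp only [mem_inter, mem_insert]
          constructor
          · rintro ⟨hxA, hx | hx⟩
            · exact Or.inl hx
            · exact Or.inr ⟨hxA, hx⟩
          · rintro (rfl | ⟨hxA, hx⟩)
            · exact ⟨hmA, Or.inl rfl⟩
            · exact ⟨hxA, Or.inr hx⟩
        rcases aux_step_cases I (pgreedy I (l.take i)) l[i] with ⟨heq, _⟩ | ⟨heq, _⟩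
        · rw [hAsucc, hstep, heq] at hcR ⊢
          rw [card_insert_of_notMem hmB, card_insert_of_notMem hmS] at hcR
          rw [sum_insert hmB, sum_insert hmS, card_insert_of_notMem hmB,
            card_insert_of_notMem hmS]
          push_cast at hcR ⊢
          nlinarith [mul_nonneg (sub_nonneg.2 hVle) (sub_nonneg.2 hcR)]
        · rw [hAsucc, hstep, heq] at hcR ⊢
          rw [card_insert_of_notMem hmB] at hcR
          rw [sum_insert hmB, card_insert_of_notMem hmB]
          push_cast at hcR ⊢
          nlinarith [mul_nonneg (sub_nonneg.2 hVle) (sub_nonneg.2 hcR)]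
      · have hAsucc : A ∩ (l.take (i+1)).toFinset = A ∩ (l.take i).toFinset := by
          rw [hTsucc]; ext x
          simp only [mem_inter, mem_insert]
          constructor
          · rintro ⟨hxA, hx | hx⟩
            · exact absurd (hx ▸ hxA) hmA
            · exact ⟨hxA, hx⟩
          · rintro ⟨hxA, hx⟩
            exact ⟨hxA, Or.inr hx⟩
        rcases aux_step_cases I (pgreedy I (l.take i)) l[i] with ⟨heq, _⟩ | ⟨heq, _⟩
        · rw [hAsucc, hstep, heq] at hcR ⊢
          rw [card_insert_of_notMem hmS] at hcR
          rw [sum_insert hmS, card_insert_of_notMem hmS]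
          push_cast at hcR ⊢
          nlinarith [mul_nonneg (sub_nonneg.2 hVle) (sub_nonneg.2 hcR)]
        · rw [hAsucc, hstep, heq] at hcR ⊢
          nlinarith [mul_nonneg (sub_nonneg.2 hVle) (sub_nonneg.2 hcR)]
    · have h1 : l.take (i+1) = l.take i := by
        rw [List.take_of_length_le (by omega), List.take_of_length_le (by omega)]
      have hV1 : auxV w l (i+1) = 0 := dif_neg (by omega)
      have hV2 : auxV w l i = 0 := dif_neg (by omega)
      rw [h1, hV1]
      rw [hV2] at ih
      linarith

end Aux4

/-- on a poset matroid, every output of PGREEDY with an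
order-preserving nonnegative weight function achieves the maximum weight
over all independent sets. -/
theorem stmt19 {P : Type*} [Fintype P] [PartialOrder P] [DecidableEq P]
    (I : Set (Finset P)) (hI : PosetMatroid I)
    (w : P → ℝ) (hw0 : ∀ x, 0 ≤ w x) (hw : ∀ x y : P, x ≤ y → w x ≤ w y)
    (l : List P) (hl : IsGreedyOrder w l) :
    pgreedy I l ∈ I ∧ ∀ A ∈ I, ∑ x ∈ A, w x ≤ ∑ x ∈ pgreedy I l, w x := by
  have hn : l.take l.length = l := List.take_length
  constructor
  · have := (aux_S_mem hI l l.length).1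
    rwa [hn] at this
  · intro A hA
    have h := aux_main hI hw0 hw hl hA l.length
    rw [hn] at h
    have hV : auxV w l l.length = 0 := dif_neg (lt_irrefl _)
    have hAl : A ∩ l.toFinset = A := by
      ext x
      simp only [mem_inter, List.mem_toFinset, and_iff_left_iff_imp]
      intro _
      exact hl.2.1 x
    rw [hV, hAl] at h
    linarith
end
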